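/- Let a be a nonempty list of integers all of whose entries are nonzero. If a list b parses with respect to a with data (n, (ε_1,…,ε_n), (c_1,…,c_{n−1})) and also with data (n′, (ε′_1,…,ε′_{n′}), (c′_1,…,c′_{n′−1})), then n = n′, ε_i = ε′_i for all i, and c_i = c′_i for all i; that is, the parsing of b with respect to a is unique. -/

import Mathlib

/-- The `i`-th tile (1-indexed) in a parsing with respect to `a`: `εᵢ·a` if `i` is odd
and `εᵢ·rev(a)` if `i` is even, where `ε·a` is entrywise multiplication. -/
def parseTile (a : List ℤ) (ε : ℕ → ℤ) (i : ℕ) : List ℤ :=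
  (if i % 2 = 1 then a else a.reverse).map (fun x => ε i * x)

/-- The list `ε₁·a ⧺ (2c₁) ⧺ ε₂·rev(a) ⧺ (2c₂) ⧺ ⋯ ⧺ εₙ·a⁽ⁿ⁾` built from `n` tiles
separated by the connectors `(2c₁), …, (2c_{n−1})`. -/
def parseBuild (a : List ℤ) (ε c : ℕ → ℤ) : ℕ → List ℤ
  | 0 => []
  | n + 1 =>
    if n = 0 then parseTile a ε 1
    else parseBuild a ε c n ++ (2 * c n) :: parseTile a ε (n + 1)

/-- `b` parses with respect to `a` with data `(n, (ε₁,…,εₙ), (c₁,…,c_{n−1}))`: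
`b = ε₁·a ⧺ (2c₁) ⧺ ε₂·rev(a) ⧺ (2c₂) ⧺ ⋯ ⧺ εₙ·a⁽ⁿ⁾`, where each `εᵢ ∈ {1, −1}`,
each `cᵢ` is an integer, and `cᵢ = 0` implies `εᵢ = ε_{i+1}`. -/
def ParsesWith (a b : List ℤ) (n : ℕ) (ε c : ℕ → ℤ) : Prop :=
  1 ≤ n ∧
  (∀ i, 1 ≤ i → i ≤ n → ε i = 1 ∨ ε i = -1) ∧
  (∀ i, 1 ≤ i → i ≤ n - 1 → c i = 0 → ε i = ε (i + 1)) ∧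
  b = parseBuild a ε c n

lemma parseTile_length (a : List ℤ) (ε : ℕ → ℤ) (i : ℕ) :
    (parseTile a ε i).length = a.length := by
  unfold parseTile; split <;> simp

lemma parseBuild_length (a : List ℤ) (ε c : ℕ → ℤ) (n : ℕ) (hn : 1 ≤ n) :
    (parseBuild a ε c n).length = n * a.length + (n - 1) := by
  induction n with
  | zero => omega
  | succ m ih =>
    by_cases hm : m = 0
    · subst hm; simp [parseBuild, parseTile_length]
    · simp only [parseBuild, if_neg hm]
      rw [List.length_append, ih (by omega)]
      simp only [List.length_cons, parseTile_length]
      rw [Nat.succ_mul]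
      omega

lemma tile_sign (a : List ℤ) (ha : a ≠ []) (h0 : ∀ x ∈ a, x ≠ 0)
    (ε ε' : ℕ → ℤ) (i : ℕ) (h : parseTile a ε i = parseTile a ε' i) :
    ε i = ε' i := by
  unfold parseTile at h
  set l := if i % 2 = 1 then a else a.reverse with hl
  have hl' : l ≠ [] := by rw [hl]; split <;> simp [ha]
  have hmem : ∀ x ∈ l, x ≠ 0 := by
    intro x hx
    apply h0
    rw [hl] at hx
    split at hx
    · exact hx
    · simpa using hx
  obtain ⟨x, t, hxt⟩ := List.exists_cons_of_ne_nil hl'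
  rw [hxt] at h
  simp only [List.map_cons, List.cons.injEq] at h
  have hx0 : x ≠ 0 := hmem x (hxt ▸ (List.mem_cons_self : x ∈ x :: t))
  exact mul_right_cancel₀ hx0 h.1

lemma build_unique (a : List ℤ) (ha : a ≠ []) (h0 : ∀ x ∈ a, x ≠ 0)
    (ε c ε' c' : ℕ → ℤ) :
    ∀ n, 1 ≤ n → parseBuild a ε c n = parseBuild a ε' c' n →
      (∀ i, 1 ≤ i → i ≤ n → ε i = ε' i) ∧ (∀ i, 1 ≤ i → i ≤ n - 1 → c i = c' i) := by
  intro n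
  induction n with
  | zero => omega
  | succ m ih =>
    intro _ h
    by_cases hm : m = 0
    · subst hm
      simp only [parseBuild, if_pos rfl] at h
      refine ⟨?_, by omega⟩
      intro i h1 h2
      have : i = 1 := by omega
      subst this
      exact tile_sign a ha h0 ε ε' 1 h
    · simp only [parseBuild, if_neg hm] at h
      have hlen : (parseBuild a ε c m).length = (parseBuild a ε' c' m).length := by
        rw [parseBuild_length a ε c m (by omega), parseBuild_length a ε' c' m (by omega)]
      obtain ⟨h1, h2⟩ := List.append_inj h hlen
      obtain ⟨hc, ht⟩ := List.cons.inj h2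
      obtain ⟨hε, hcs⟩ := ih (by omega) h1
      constructor
      · intro i hi1 hi2
        rcases Nat.lt_or_ge i (m + 1) with hlt | hge
        · exact hε i hi1 (by omega)
        · have : i = m + 1 := by omega
          subst this
          exact tile_sign a ha h0 ε ε' (m + 1) ht
      · intro i hi1 hi2
        rcases Nat.lt_or_ge i m with hlt | hge
        · exact hcs i hi1 (by omega)
        · have : i = m := by omega
          subst this
          omega

/-- If `a` is a nonempty list of nonzero integers, then the parsing of a list `b` with
respect to `a` is unique: the number of tiles `n`, the signs `ε₁, …, εₙ` and the
connectors `c₁, …, c_{n−1}` are all determined by `b`. -/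
theorem stmt10 (a b : List ℤ) (ha : a ≠ []) (h0 : ∀ x ∈ a, x ≠ 0)
    (n n' : ℕ) (ε c ε' c' : ℕ → ℤ)
    (h : ParsesWith a b n ε c) (h' : ParsesWith a b n' ε' c') :
    n = n' ∧ (∀ i, 1 ≤ i → i ≤ n → ε i = ε' i) ∧
      (∀ i, 1 ≤ i → i ≤ n - 1 → c i = c' i) := by
  obtain ⟨hn, -, -, hb⟩ := h
  obtain ⟨hn', -, -, hb'⟩ := h'
  have hbb : parseBuild a ε c n = parseBuild a ε' c' n' := hb ▸ hb'
  have hL : n * a.length + (n - 1) = n' * a.length + (n' - 1) := by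
    rw [← parseBuild_length a ε c n hn, ← parseBuild_length a ε' c' n' hn', hbb]
  have hnn : n = n' := by
    have h1 : n * (a.length + 1) = n' * (a.length + 1) := by
      rw [Nat.mul_add, Nat.mul_add, Nat.mul_one, Nat.mul_one]
      omega
    exact Nat.eq_of_mul_eq_mul_right (by omega) h1
  subst hnn
  obtain ⟨he, hc⟩ := build_unique a ha h0 ε c ε' c' n hn hbb
  exact ⟨rfl, he, hc⟩
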